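/- Let Ω ⊆ ℝ^n be a nonempty open set, let p₂ > p₁ - 1 > 0 be real numbers and set p = p₂/(p₂ - p₁ + 1). Let f : ℝ^n → ℝ be a C¹ function and let C, D > 0 be real numbers such that for every nonnegative smooth function φ : ℝ^n → ℝ with compact support contained in Ω one has -∫_Ω ‖∇f‖^{p₁-2} ⟨∇f, ∇φ⟩ dx - C ∫_Ω φ ‖∇f‖^{p₂} dx ≥ D ∫_Ω φ dx. Then for every smooth function v : ℝ^n → ℝ with compact support contained in Ω one has (C/(p-1))^{p-1} · D · ∫_Ω |v|^p dx ≤ ∫_Ω ‖∇v‖^p dx. -/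

import Mathlib

open MeasureTheory Real RealInnerProductSpace

section Aux

variable {F : Type*} [NormedAddCommGroup F] [InnerProductSpace ℝ F] [CompleteSpace F]

lemma aux_gradient_zero {g : F → ℝ} {x : F} (hx : x ∉ tsupport g) : gradient g x = 0 := by
  have : fderiv ℝ g x = 0 := by
    by_contra h
    exact hx (support_fderiv_subset ℝ (f := g) h)
  rw [gradient, this, map_zero]

lemma aux_gradient_continuous {g : F → ℝ} (hg : ContDiff ℝ 1 g) : Continuous (gradient g) :=
  (InnerProductSpace.toDual ℝ F).symm.continuous.comp (hg.continuous_fderiv one_ne_zero)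

lemma aux_gradient_comp {g : F → ℝ} {h : ℝ → ℝ} {h' : ℝ} {x : F} (hd : HasDerivAt h h' (g x))
    (hg : DifferentiableAt ℝ g x) :
    gradient (fun y => h (g y)) x = h' • gradient g x := by
  have h2 : HasFDerivAt (fun y => h (g y)) (h' • fderiv ℝ g x) x :=
    hd.comp_hasFDerivAt x hg.hasFDerivAt
  rw [gradient, h2.fderiv, _root_.map_smul, gradient]

lemma aux_inner_bound (g w : F) (c : ℝ) (hc : 0 < c + 1) :
    |‖g‖ ^ c * ⟪g, w⟫| ≤ ‖g‖ ^ (c + 1) * ‖w‖ := by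
  rcases eq_or_ne g 0 with rfl | hg
  · simp [Real.zero_rpow hc.ne']
  · rw [abs_mul, abs_of_nonneg (Real.rpow_nonneg (norm_nonneg _) _),
      Real.rpow_add_one (norm_ne_zero_iff.2 hg)]
    calc ‖g‖ ^ c * |⟪g, w⟫| ≤ ‖g‖ ^ c * (‖g‖ * ‖w‖) :=
          mul_le_mul_of_nonneg_left (abs_real_inner_le_norm g w)
            (Real.rpow_nonneg (norm_nonneg _) _)
      _ = ‖g‖ ^ c * ‖g‖ * ‖w‖ := by ring

end Aux

lemma aux_young_special {p C a b : ℝ} (hp : 1 < p) (hC : 0 < C) (ha : 0 ≤ a) (hb : 0 ≤ b) :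
    p * a * b ≤ C * a ^ (p/(p-1)) + ((p-1)/C) ^ (p-1) * b ^ p := by
  set q := p / (p-1) with hqdef
  have hp0 : 0 < p := lt_trans one_pos hp
  have hp1 : 0 < p - 1 := sub_pos.2 hp
  have hq0 : 0 < q := div_pos hp0 hp1
  have hpq : q.HolderConjugate p := by
    rw [Real.holderConjugate_iff]
    constructor
    · rw [hqdef, lt_div_iff₀ hp1]; linarith
    · rw [hqdef]; field_simp; ring
  have hCq : 0 < C * q := mul_pos hC hq0
  set t := (C*q) ^ (1/q) with htdef
  have ht0 : 0 < t := rpow_pos_of_pos hCq _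
  have htq : t ^ q = C * q := by
    rw [htdef, ← Real.rpow_mul hCq.le, one_div, inv_mul_cancel₀ hq0.ne', Real.rpow_one]
  have htp : t ^ p = (C*q) ^ (p - 1) := by
    rw [htdef, ← Real.rpow_mul hCq.le]
    congr 1
    rw [hqdef]
    field_simp
  have key := Real.young_inequality_of_nonneg (mul_nonneg ht0.le ha)
    (by positivity : (0:ℝ) ≤ p * b / t) hpq
  have e1 : (t*a)*(p*b/t) = p*a*b := by field_simp
  have e2 : (t*a)^q / q = C * a^q := by
    rw [Real.mul_rpow ht0.le ha, htq]; field_simp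
  have e3 : (p*b/t)^p / p = ((p-1)/C)^(p-1) * b^p := by
    have h4 : p*b/t = (p/t) * b := by ring
    rw [h4, Real.mul_rpow (by positivity) hb, Real.div_rpow hp0.le ht0.le, htp]
    have h5 : (p-1)/C = p/(C*q) := by rw [hqdef]; field_simp
    rw [h5, Real.div_rpow hp0.le hCq.le]
    have h6 : p ^ (p-1) = p ^ p / p := by
      rw [Real.rpow_sub hp0, Real.rpow_one]
    rw [h6]
    field_simp
  rw [e1, e2, e3] at key
  exact key

lemma aux_sq_rpow_half {ε pr : ℝ} (hε : 0 ≤ ε) : (ε^2) ^ (pr/2) = ε ^ pr := by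
  rw [← Real.rpow_natCast ε 2, ← Real.rpow_mul hε]
  congr 1
  push_cast
  ring

set_option maxHeartbeats 1600000 in
/-- Theorem 1.1: lower bound for the first Dirichlet `p`-eigenvalue from a function `f`
satisfying `Δ_{p₁} f - C|∇f|^{p₂} ≥ D` in the weak (distributional) sense. -/
theorem eigenvalue_lower_bound_via_function {n : ℕ}
    (Ω : Set (EuclideanSpace ℝ (Fin n))) (hne : Ω.Nonempty) (hΩ : IsOpen Ω)
    (p₁ p₂ p : ℝ) (hp₁ : 0 < p₁ - 1) (hp₂ : p₁ - 1 < p₂)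
    (hp : p = p₂ / (p₂ - p₁ + 1))
    (f : EuclideanSpace ℝ (Fin n) → ℝ) (hf : ContDiff ℝ 1 f)
    (C D : ℝ) (hC : 0 < C) (hD : 0 < D)
    (hdiv : ∀ φ : EuclideanSpace ℝ (Fin n) → ℝ, ContDiff ℝ (⊤ : ℕ∞) φ →
      HasCompactSupport φ → tsupport φ ⊆ Ω → (∀ x, 0 ≤ φ x) →
      D * ∫ x in Ω, φ x ≤
        (-∫ x in Ω, ‖gradient f x‖ ^ (p₁ - 2) * ⟪gradient f x, gradient φ x⟫) -
          C * ∫ x in Ω, φ x * ‖gradient f x‖ ^ p₂) :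
    ∀ v : EuclideanSpace ℝ (Fin n) → ℝ, ContDiff ℝ (⊤ : ℕ∞) v →
      HasCompactSupport v → tsupport v ⊆ Ω →
      (C / (p - 1)) ^ (p - 1) * D * ∫ x in Ω, |v x| ^ p ≤
        ∫ x in Ω, ‖gradient v x‖ ^ p := by
  intro v hv hvc hvΩ
  set K := tsupport v with hKdef
  have hK : IsCompact K := hvc
  have hQ : 0 < p₂ - p₁ + 1 := by linarith
  have hp1 : 1 < p := by
    rw [hp, lt_div_iff₀ hQ]; linarith
  have hp0 : 0 < p := lt_trans one_pos hp1
  have hpm1 : 0 < p - 1 := sub_pos.2 hp1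
  set kk := ((p-1)/C) ^ (p-1) with hkkdef
  set M := ∫ x in Ω, K.indicator (fun y => ‖gradient f y‖ ^ p₂) x with hMdef
  set μK := ∫ x in Ω, K.indicator (fun _ => (1:ℝ)) x with hμKdef
  set J := ∫ x in Ω, ‖gradient v x‖ ^ p with hJdef
  set Iv := ∫ x in Ω, |v x| ^ p with hIvdef
  have hcv : Continuous (gradient v) := aux_gradient_continuous (hv.of_le (by exact_mod_cast le_top))
  have hcf : Continuous (gradient f) := aux_gradient_continuous hf
  have hvK : ∀ x ∉ K, v x = 0 := fun x hx => image_eq_zero_of_notMem_tsupport hx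
  have hgvK : ∀ x ∉ K, gradient v x = 0 := fun x hx => aux_gradient_zero hx
  have hp₂0 : 0 < p₂ := lt_trans hp₁ hp₂
  have hpq2 : (p₁ - 1) * (p/(p-1)) = p₂ := by
    have e2 : (p₁-1)*p = p₂*(p-1) := by rw [hp]; field_simp; ring
    calc (p₁-1)*(p/(p-1)) = ((p₁-1)*p)/(p-1) := by ring
      _ = (p₂*(p-1))/(p-1) := by rw [e2]
      _ = p₂ := by field_simp
  have main : ∀ ε : ℝ, 0 < ε → D * Iv ≤ ε ^ p * (C * M + D * μK) + kk * J := by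
    intro ε hε
    set s : EuclideanSpace ℝ (Fin n) → ℝ := fun x => v x ^ 2 + ε ^ 2 with hsdef
    set φ : EuclideanSpace ℝ (Fin n) → ℝ := fun x => s x ^ (p/2) - ε ^ p with hφdef
    have hs_pos : ∀ x, 0 < s x := fun x => by
      have := sq_nonneg (v x); have := sq_nonneg ε
      simp only [hsdef]; positivity
    have hssmooth : ContDiff ℝ (⊤ : ℕ∞) s := (hv.pow 2).add contDiff_const
    have hφsmooth : ContDiff ℝ (⊤ : ℕ∞) φ := by
      have h1 : ∀ x, ContDiffAt ℝ (⊤ : ℕ∞) (fun y => s y ^ (p/2)) x := fun x =>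
        (Real.contDiffAt_rpow_const_of_ne (hs_pos x).ne').comp x hssmooth.contDiffAt
      exact (contDiff_iff_contDiffAt.2 h1).sub contDiff_const
    have hεp : (0:ℝ) < ε ^ p := rpow_pos_of_pos hε p
    have hsphi : ∀ x, s x ^ (p/2) = φ x + ε ^ p := fun x => by simp [hφdef]
    have hφ0 : ∀ x, 0 ≤ φ x := by
      intro x
      have h1 : ε ^ p = (ε^2) ^ (p/2) := (aux_sq_rpow_half hε.le).symm
      have h2 : (ε^2:ℝ) ^ (p/2) ≤ s x ^ (p/2) :=
        Real.rpow_le_rpow (by positivity)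
          (by simp only [hsdef]; nlinarith [sq_nonneg (v x)]) (by positivity)
      simp only [hφdef]
      linarith
    have hφK : ∀ x ∉ K, φ x = 0 := by
      intro x hx
      simp only [hφdef, hsdef]
      rw [hvK x hx]
      norm_num [aux_sq_rpow_half hε.le]
    have hφcs : HasCompactSupport φ := HasCompactSupport.intro hK hφK
    have hφtsub : tsupport φ ⊆ K :=
      closure_minimal (Function.support_subset_iff'.2 hφK) hK.isClosed
    have hφΩ : tsupport φ ⊆ Ω := hφtsub.trans hvΩ
    set c : EuclideanSpace ℝ (Fin n) → ℝ := fun x => p * v x * s x ^ (p/2 - 1) with hcdef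
    have hgradφ : ∀ x, gradient φ x = c x • gradient v x := by
      intro x
      have hinner : HasDerivAt (fun t : ℝ => t^2 + ε^2) (2 * v x) (v x) := by
        simpa using ((hasDerivAt_pow 2 (v x)).add_const (ε^2))
      have houter : HasDerivAt (fun y : ℝ => y ^ (p/2)) ((p/2) * (s x) ^ (p/2 - 1)) (s x) :=
        Real.hasDerivAt_rpow_const (Or.inl (hs_pos x).ne')
      have hcomp : HasDerivAt (fun t : ℝ => (t^2 + ε^2) ^ (p/2) - ε^p)
          ((p/2) * (s x) ^ (p/2-1) * (2 * v x)) (v x) :=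
        (houter.comp (v x) hinner).sub_const _
      have h2 := aux_gradient_comp hcomp ((hv.differentiable (by simp)).differentiableAt)
      have h3 : c x = (p/2) * (s x) ^ (p/2-1) * (2 * v x) := by
        simp only [hcdef]; ring
      rw [h3]
      exact h2
    -- pointwise bound
    have hptbound : ∀ x, -(‖gradient f x‖ ^ (p₁-2) * ⟪gradient f x, gradient φ x⟫) ≤
        C * (φ x * ‖gradient f x‖ ^ p₂) +
          C * ε^p * K.indicator (fun y => ‖gradient f y‖ ^ p₂) x +
          kk * ‖gradient v x‖ ^ p := by
      intro x
      by_cases hx : x ∈ K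
      · rw [Set.indicator_of_mem hx]
        have hb1 : -(‖gradient f x‖ ^ (p₁-2) * ⟪gradient f x, gradient φ x⟫) ≤
            |c x| * (‖gradient f x‖ ^ (p₁-1) * ‖gradient v x‖) := by
          have e1 : ‖gradient f x‖ ^ (p₁-2) * ⟪gradient f x, gradient φ x⟫ =
              c x * (‖gradient f x‖ ^ (p₁-2) * ⟪gradient f x, gradient v x⟫) := by
            rw [hgradφ x, real_inner_smul_right]; ring
          have e2 := aux_inner_bound (gradient f x) (gradient v x) (p₁-2) (by linarith)
          rw [show p₁ - 2 + 1 = p₁ - 1 by ring] at e2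
          calc -(‖gradient f x‖ ^ (p₁-2) * ⟪gradient f x, gradient φ x⟫) ≤
              |‖gradient f x‖ ^ (p₁-2) * ⟪gradient f x, gradient φ x⟫| := neg_le_abs _
            _ = |c x| * |‖gradient f x‖ ^ (p₁-2) * ⟪gradient f x, gradient v x⟫| := by
                rw [e1, abs_mul]
            _ ≤ |c x| * (‖gradient f x‖ ^ (p₁-1) * ‖gradient v x‖) :=
                mul_le_mul_of_nonneg_left e2 (abs_nonneg _)
        have hb2 : |c x| ≤ p * s x ^ ((p-1)/2) := by
          have e1 : |c x| = p * |v x| * s x ^ (p/2 - 1) := by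
            simp only [hcdef]
            rw [abs_mul, abs_mul, abs_of_nonneg hp0.le,
              abs_of_nonneg (Real.rpow_nonneg (hs_pos x).le _)]
          have e2 : |v x| ≤ s x ^ ((1:ℝ)/2) := by
            have e3 : |v x| = (v x ^ 2) ^ ((1:ℝ)/2) := by
              rw [← sq_abs, aux_sq_rpow_half (abs_nonneg _), Real.rpow_one]
            rw [e3]
            apply Real.rpow_le_rpow (sq_nonneg _) _ (by norm_num)
            simp only [hsdef]
            nlinarith [sq_nonneg ε]
          calc |c x| = p * |v x| * s x ^ (p/2 - 1) := e1
            _ ≤ p * s x ^ ((1:ℝ)/2) * s x ^ (p/2 - 1) := by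
                apply mul_le_mul_of_nonneg_right _ (Real.rpow_nonneg (hs_pos x).le _)
                exact mul_le_mul_of_nonneg_left e2 hp0.le
            _ = p * s x ^ ((p-1)/2) := by
                rw [mul_assoc, ← Real.rpow_add (hs_pos x)]
                congr 2
                ring
        set a := ‖gradient f x‖ ^ (p₁ - 1) * s x ^ ((p-1)/2) with hadef
        have ha0 : 0 ≤ a := mul_nonneg (Real.rpow_nonneg (norm_nonneg _) _)
          (Real.rpow_nonneg (hs_pos x).le _)
        have hyoung := aux_young_special hp1 hC ha0 (norm_nonneg (gradient v x))
        have haq : a ^ (p/(p-1)) = (φ x + ε^p) * ‖gradient f x‖ ^ p₂ := by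
          rw [hadef, Real.mul_rpow (Real.rpow_nonneg (norm_nonneg _) _)
            (Real.rpow_nonneg (hs_pos x).le _),
            ← Real.rpow_mul (norm_nonneg _), ← Real.rpow_mul (hs_pos x).le, hpq2,
            show (p-1)/2 * (p/(p-1)) = p/2 by field_simp, hsphi x]
          ring
        calc -(‖gradient f x‖ ^ (p₁-2) * ⟪gradient f x, gradient φ x⟫)
            ≤ |c x| * (‖gradient f x‖ ^ (p₁-1) * ‖gradient v x‖) := hb1
          _ ≤ (p * s x ^ ((p-1)/2)) * (‖gradient f x‖ ^ (p₁-1) * ‖gradient v x‖) :=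
              mul_le_mul_of_nonneg_right hb2
                (mul_nonneg (Real.rpow_nonneg (norm_nonneg _) _) (norm_nonneg _))
          _ = p * a * ‖gradient v x‖ := by rw [hadef]; ring
          _ ≤ C * a ^ (p/(p-1)) + kk * ‖gradient v x‖ ^ p := by rw [hkkdef]; exact hyoung
          _ = C * ((φ x + ε^p) * ‖gradient f x‖ ^ p₂) + kk * ‖gradient v x‖ ^ p := by rw [haq]
          _ = C * (φ x * ‖gradient f x‖ ^ p₂) + C * ε^p * ‖gradient f x‖ ^ p₂ +
              kk * ‖gradient v x‖ ^ p := by ring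
      · have h1 : gradient φ x = 0 := aux_gradient_zero (fun hmem => hx (hφtsub hmem))
        rw [h1, inner_zero_right, Set.indicator_of_notMem hx]
        have h2 : 0 ≤ C * (φ x * ‖gradient f x‖ ^ p₂) :=
          mul_nonneg hC.le (mul_nonneg (hφ0 x) (Real.rpow_nonneg (norm_nonneg _) _))
        have h3 : 0 ≤ kk * ‖gradient v x‖ ^ p :=
          mul_nonneg (Real.rpow_nonneg (by positivity) _) (Real.rpow_nonneg (norm_nonneg _) _)
        simp only [mul_zero, neg_zero]
        linarith
    -- continuity and integrability
    have hcφ : Continuous φ := hφsmooth.continuous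
    have hcgφ : Continuous (gradient φ) :=
      aux_gradient_continuous (hφsmooth.of_le (by exact_mod_cast le_top))
    have hgφK : ∀ x ∉ K, gradient φ x = 0 := fun x hx =>
      aux_gradient_zero (fun h => hx (hφtsub h))
    have hcnf : Continuous (fun x => ‖gradient f x‖ ^ p₂) :=
      (continuous_norm.comp hcf).rpow_const (fun x => Or.inr hp₂0.le)
    have int_g2 : IntegrableOn (fun x => φ x * ‖gradient f x‖ ^ p₂) Ω volume := by
      apply Integrable.integrableOn
      apply Continuous.integrable_of_hasCompactSupport (hcφ.mul hcnf)
      exact HasCompactSupport.intro hK (fun x hx => by rw [Pi.mul_apply, hφK x hx]; simp)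
    have int_g3 : IntegrableOn (K.indicator (fun y => ‖gradient f y‖ ^ p₂)) Ω volume :=
      ((hcnf.continuousOn.integrableOn_compact hK).integrable_indicator
        hK.measurableSet).integrableOn
    have int_g4 : IntegrableOn (fun x => ‖gradient v x‖ ^ p) Ω volume := by
      apply Integrable.integrableOn
      apply Continuous.integrable_of_hasCompactSupport
        ((continuous_norm.comp hcv).rpow_const (fun x => Or.inr hp0.le))
      exact HasCompactSupport.intro hK (fun x hx => by
        simp [hgvK x hx, Real.zero_rpow hp0.ne'])
    have int_g5 : IntegrableOn (fun x => |v x| ^ p) Ω volume := by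
      apply Integrable.integrableOn
      apply Continuous.integrable_of_hasCompactSupport
        ((continuous_abs.comp hv.continuous).rpow_const (fun x => Or.inr hp0.le))
      exact HasCompactSupport.intro hK (fun x hx => by
        simp [hvK x hx, Real.zero_rpow hp0.ne'])
    have int_g6 : IntegrableOn (K.indicator (fun _ => (1:ℝ))) Ω volume :=
      ((integrableOn_const hK.measure_lt_top.ne).integrable_indicator
        hK.measurableSet).integrableOn
    have int_φ : IntegrableOn φ Ω volume :=
      (hcφ.integrable_of_hasCompactSupport hφcs).integrableOn
    have int_g1 : IntegrableOn
        (fun x => ‖gradient f x‖ ^ (p₁-2) * ⟪gradient f x, gradient φ x⟫) Ω volume := by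
      have hbc : Continuous (fun x => ‖gradient f x‖ ^ (p₁-1) * ‖gradient φ x‖) :=
        ((continuous_norm.comp hcf).rpow_const (fun x => Or.inr (by linarith))).mul
          (continuous_norm.comp hcgφ)
      have hbcs : HasCompactSupport (fun x => ‖gradient f x‖ ^ (p₁-1) * ‖gradient φ x‖) :=
        HasCompactSupport.intro hK (fun x hx => by rw [hgφK x hx]; simp)
      apply Integrable.mono' (hbc.integrable_of_hasCompactSupport hbcs).integrableOn
      · apply AEStronglyMeasurable.mul
        · have hm : Measurable fun x => ‖gradient f x‖ := (continuous_norm.comp hcf).measurable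
          exact (hm.pow_const (p₁ - 2)).aestronglyMeasurable
        · exact (hcf.inner hcgφ).aestronglyMeasurable
      · apply Filter.Eventually.of_forall
        intro x
        rw [Real.norm_eq_abs]
        have h5 := aux_inner_bound (gradient f x) (gradient φ x) (p₁-2) (by linarith)
        rwa [show p₁ - 2 + 1 = p₁ - 1 by ring] at h5
    -- apply the divergence hypothesis and integrate the pointwise bound
    have hI := hdiv φ hφsmooth hφcs hφΩ hφ0
    have hmono1 : ∫ x in Ω, -(‖gradient f x‖ ^ (p₁-2) * ⟪gradient f x, gradient φ x⟫) ≤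
        ∫ x in Ω, (C * (φ x * ‖gradient f x‖ ^ p₂) +
          C * ε^p * K.indicator (fun y => ‖gradient f y‖ ^ p₂) x +
          kk * ‖gradient v x‖ ^ p) := by
      apply integral_mono int_g1.neg _ hptbound
      exact ((int_g2.const_mul C).add (int_g3.const_mul (C * ε^p))).add (int_g4.const_mul kk)
    have intsum2 : Integrable (fun x => C * (φ x * ‖gradient f x‖ ^ p₂) +
        C * ε^p * K.indicator (fun y => ‖gradient f y‖ ^ p₂) x) (volume.restrict Ω) :=
      (int_g2.const_mul C).add (int_g3.const_mul (C*ε^p))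
    have intlast : Integrable (fun x => kk * ‖gradient v x‖ ^ p) (volume.restrict Ω) :=
      int_g4.const_mul kk
    rw [integral_neg, integral_add intsum2 intlast,
      integral_add (int_g2.const_mul C) (int_g3.const_mul (C*ε^p)),
      integral_const_mul, integral_const_mul, integral_const_mul,
      ← hMdef, ← hJdef] at hmono1
    have hmono2 : Iv ≤ (∫ x in Ω, φ x) + ε^p * μK := by
      have hpt : ∀ x, |v x| ^ p ≤ φ x + ε^p * K.indicator (fun _ => (1:ℝ)) x := by
        intro x
        by_cases hx : x ∈ K
        · rw [Set.indicator_of_mem hx]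
          have e3 : |v x| ^ p = (v x ^ 2) ^ (p/2) := by
            rw [← sq_abs, aux_sq_rpow_half (abs_nonneg _)]
          have h6 := Real.rpow_le_rpow (sq_nonneg (v x))
            (show v x ^ 2 ≤ s x by simp only [hsdef]; nlinarith [sq_nonneg ε])
            (by positivity : (0:ℝ) ≤ p/2)
          rw [hsphi x] at h6
          rw [e3]
          simpa using h6
        · rw [Set.indicator_of_notMem hx, hvK x hx]
          have := hφ0 x
          simp only [abs_zero, Real.zero_rpow hp0.ne', mul_zero, add_zero]
          linarith
      have intsum4 : Integrable (fun x => φ x + ε^p * K.indicator (fun _ => (1:ℝ)) x)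
          (volume.restrict Ω) := int_φ.add (int_g6.const_mul (ε^p))
      have h7 := integral_mono int_g5 intsum4 hpt
      rw [integral_add int_φ (int_g6.const_mul (ε^p)), integral_const_mul, ← hμKdef,
        ← hIvdef] at h7
      exact h7
    -- combine
    have h8 : D * (∫ x in Ω, φ x) ≤ C * ε^p * M + kk * J := by linarith
    nlinarith [mul_le_mul_of_nonneg_left hmono2 hD.le]
  -- final limit argument
  have hk0 : 0 < (C/(p-1))^(p-1) := rpow_pos_of_pos (div_pos hC hpm1) _
  have hkkk : (C/(p-1))^(p-1) * kk = 1 := by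
    rw [hkkdef, ← Real.mul_rpow (div_pos hC hpm1).le (div_pos hpm1 hC).le,
      div_mul_div_comm, mul_comm (p-1) C, div_self (by positivity), Real.one_rpow]
  have hb : ∀ m : ℕ, (C/(p-1))^(p-1) * D * Iv ≤
      ((1:ℝ)/(m+1))^p * ((C/(p-1))^(p-1) * (C * M + D * μK)) + J := by
    intro m
    have h1 := main ((1:ℝ)/(m+1)) (by positivity)
    have h2 := mul_le_mul_of_nonneg_left h1 hk0.le
    have h3 : (C/(p-1))^(p-1) * (((1:ℝ)/(m+1))^p * (C*M + D*μK) + kk*J) =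
        ((1:ℝ)/(m+1))^p * ((C/(p-1))^(p-1) * (C*M + D*μK)) + J := by
      linear_combination J * hkkk
    calc (C/(p-1))^(p-1) * D * Iv = (C/(p-1))^(p-1) * (D * Iv) := by ring
      _ ≤ (C/(p-1))^(p-1) * (((1:ℝ)/(m+1))^p * (C*M + D*μK) + kk*J) := h2
      _ = ((1:ℝ)/(m+1))^p * ((C/(p-1))^(p-1) * (C*M + D*μK)) + J := h3
  have hlim : Filter.Tendsto
      (fun m : ℕ => ((1:ℝ)/(m+1))^p * ((C/(p-1))^(p-1) * (C * M + D * μK)) + J)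
      Filter.atTop (nhds J) := by
    have h0 : Filter.Tendsto (fun m : ℕ => (1:ℝ)/(m+1)) Filter.atTop (nhds 0) :=
      tendsto_one_div_add_atTop_nhds_zero_nat
    have h1 : Filter.Tendsto (fun m : ℕ => ((1:ℝ)/(m+1))^p) Filter.atTop (nhds 0) := by
      have := h0.rpow_const (p := p) (Or.inr hp0.le)
      rwa [Real.zero_rpow hp0.ne'] at this
    have := (h1.mul_const ((C/(p-1))^(p-1) * (C * M + D * μK))).add_const J
    simpa using this
  exact ge_of_tendsto' hlim hb
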